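/- Let P : ℝ^s → ℝ^s be firmly nonexpansive with respect to a symmetric positive definite matrix R, i.e. ‖Px − Py‖_R² ≤ ⟨Px − Py, x − y⟩_R for all x, y. Let E, M₀, M₁, M₂ be s×s matrices with RE = R + S for a skew-symmetric matrix S and RE − M₀ arbitrary. Define T(s,z) := the (assumed unique) ω satisfying ω = P((E − R^{−1}M₀)ω + R^{−1}M₁ s + R^{−1}M₂ z). Then T is weakly firmly nonexpansive with respect to {M₀, M₁, M₂}: whenever ω^i = T(s^i, z^i) for i = 1,2, one has ⟨ω²−ω¹, M₀(ω²−ω¹)⟩ ≤ ⟨ω²−ω¹, M₁(s²−s¹) + M₂(z²−z¹)⟩. -/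
import Mathlib


open scoped BigOperators
open Matrix

noncomputable def dotR {s : ℕ} (x y : Fin s → ℝ) : ℝ := ∑ i, x i * y i

lemma dotR_eq {s : ℕ} (x y : Fin s → ℝ) : dotR x y = x ⬝ᵥ y := rfl

/-- if `P` is firmly nonexpansive w.r.t. a symmetric positive definite
`R`, `RE = R + S` with `S` skew-symmetric, and `ωⁱ = P((E - R⁻¹M₀)ωⁱ + R⁻¹M₁sⁱ + R⁻¹M₂zⁱ)`
for `i = 1,2`, then `⟨ω²-ω¹, M₀(ω²-ω¹)⟩ ≤ ⟨ω²-ω¹, M₁(s²-s¹) + M₂(z²-z¹)⟩`. -/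
theorem statement14 {s : ℕ} (R E M0 M1 M2 S : Matrix (Fin s) (Fin s) ℝ)
    (hR : R.PosDef) (hS : Sᵀ = -S) (hRE : R * E = R + S)
    (P : (Fin s → ℝ) → (Fin s → ℝ))
    (hP : ∀ x y, dotR (P x - P y) (R.mulVec (P x - P y)) ≤
                 dotR (P x - P y) (R.mulVec (x - y)))
    (ω1 ω2 s1 s2 z1 z2 : Fin s → ℝ)
    (h1 : ω1 = P ((E - R⁻¹ * M0).mulVec ω1 + (R⁻¹ * M1).mulVec s1 + (R⁻¹ * M2).mulVec z1))
    (h2 : ω2 = P ((E - R⁻¹ * M0).mulVec ω2 + (R⁻¹ * M1).mulVec s2 + (R⁻¹ * M2).mulVec z2)) :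
    dotR (ω2 - ω1) (M0.mulVec (ω2 - ω1)) ≤
      dotR (ω2 - ω1) (M1.mulVec (s2 - s1) + M2.mulVec (z2 - z1)) := by
  have hdet : IsUnit R.det := isUnit_iff_ne_zero.mpr hR.det_pos.ne'
  have hRinv : R * R⁻¹ = 1 := Matrix.mul_nonsing_inv R hdet
  set x2 := (E - R⁻¹ * M0).mulVec ω2 + (R⁻¹ * M1).mulVec s2 + (R⁻¹ * M2).mulVec z2
  set x1 := (E - R⁻¹ * M0).mulVec ω1 + (R⁻¹ * M1).mulVec s1 + (R⁻¹ * M2).mulVec z1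
  set w := ω2 - ω1 with hw
  have key := hP x2 x1
  rw [← h1, ← h2] at key
  -- R (x2 - x1) = R w + S w - M0 w + M1 (s2-s1) + M2 (z2-z1)
  have hmul : ∀ (A : Matrix (Fin s) (Fin s) ℝ) v, R.mulVec (A.mulVec v) = (R * A).mulVec v :=
    fun A v => by rw [← Matrix.mulVec_mulVec]
  have hEx : R.mulVec (x2 - x1) = R.mulVec w + S.mulVec w - M0.mulVec w
      + M1.mulVec (s2 - s1) + M2.mulVec (z2 - z1) := by
    have e1 : R * (E - R⁻¹ * M0) = R + S - M0 := by
      rw [Matrix.mul_sub, hRE, ← Matrix.mul_assoc, hRinv, Matrix.one_mul]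
    have e2 : R * (R⁻¹ * M1) = M1 := by rw [← Matrix.mul_assoc, hRinv, Matrix.one_mul]
    have e3 : R * (R⁻¹ * M2) = M2 := by rw [← Matrix.mul_assoc, hRinv, Matrix.one_mul]
    have : x2 - x1 = (E - R⁻¹ * M0).mulVec w + (R⁻¹ * M1).mulVec (s2 - s1)
        + (R⁻¹ * M2).mulVec (z2 - z1) := by
      simp only [x2, x1, hw, Matrix.mulVec_sub]
      abel
    rw [this, Matrix.mulVec_add, Matrix.mulVec_add, hmul, hmul, hmul, e1, e2, e3,
      Matrix.sub_mulVec, Matrix.add_mulVec]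
  rw [hEx] at key
  have hskew : w ⬝ᵥ S.mulVec w = 0 := by
    have h1' : w ⬝ᵥ S.mulVec w = S.vecMul w ⬝ᵥ w := Matrix.dotProduct_mulVec w S w
    have h2' : S.vecMul w = -(S.mulVec w) := by
      rw [← Matrix.mulVec_transpose, hS, Matrix.neg_mulVec]
    rw [h2', neg_dotProduct] at h1'
    have hc := dotProduct_comm w (S.mulVec w)
    linarith
  simp only [dotR_eq, dotProduct_add, dotProduct_sub, hskew] at key ⊢
  linarith
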